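/- Every set functor F that admits a normal relational connector admits a greatest normal relational connector: a normal relational connector Λ of F such that Λ' r ≤ Λr for every normal relational connector Λ' of F and every relation r. -/

import Mathlib

open CategoryTheory Function

universe u

/-- Applicative composition of relations: `relComp s r = s · r`. -/
def relComp {X Y Z : Type u} (s : Y → Z → Prop) (r : X → Y → Prop) : X → Z → Prop :=
  fun x z => ∃ y, r x y ∧ s y z

/-- Converse of a relation. -/
def relConv {X Y : Type u} (r : X → Y → Prop) : Y → X → Prop := fun y x => r x y

/-- Graph relation of a function. -/
def fgraph {X Y : Type u} (f : X → Y) : X → Y → Prop := fun x y => f x = y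

/-- An `F`-relator: a monotone assignment of relations `F X ⇸ F Y` to relations `X ⇸ Y`. -/
structure Relator (F : Type u ⥤ Type u) : Type (u + 1) where
  map : ∀ {X Y : Type u}, (X → Y → Prop) → (F.obj X → F.obj Y → Prop)
  mono : ∀ {X Y : Type u} {r s : X → Y → Prop}, (∀ x y, r x y → s x y) →
    ∀ u v, map r u v → map s u v

/-- `f` is a coalgebra homomorphism from `(X, α)` to `(Y, β)`. -/
def IsCoalgHom (F : Type u ⥤ Type u) {X Y : Type u} (α : X → F.obj X) (β : Y → F.obj Y)
    (f : X → Y) : Prop :=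
  ∀ x, β (f x) = F.map (TypeCat.ofHom f) (α x)

/-- Behavioural equivalence of states. -/
def BehEq (F : Type u ⥤ Type u) {X Y : Type u} (α : X → F.obj X) (β : Y → F.obj Y)
    (x : X) (y : Y) : Prop :=
  ∃ (Z : Type u) (γ : Z → F.obj Z) (f : X → Z) (g : Y → Z),
    IsCoalgHom F α γ f ∧ IsCoalgHom F β γ g ∧ f x = g y

/-- `r` is a `Λ`-simulation from `(X, α)` to `(Y, β)`: `r ≤ β° · Λr · α`. -/
def IsSimulation {F : Type u ⥤ Type u} (Λ : Relator F) {X Y : Type u}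
    (α : X → F.obj X) (β : Y → F.obj Y) (r : X → Y → Prop) : Prop :=
  ∀ x y, r x y → Λ.map r (α x) (β y)

/-- `x` and `y` are `Λ`-similar: related by some `Λ`-simulation. -/
def LSimilar {F : Type u ⥤ Type u} (Λ : Relator F) {X Y : Type u}
    (α : X → F.obj X) (β : Y → F.obj Y) (x : X) (y : Y) : Prop :=
  ∃ r, IsSimulation Λ α β r ∧ r x y

/-- `Λ` is a relational connector: `1_{FX} ≤ Λ1_X` and `Λ(g° · r · f) = (Fg)° · Λr · Ff`. -/
def IsRelConnector (F : Type u ⥤ Type u) (Λ : Relator F) : Prop :=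
  (∀ (X : Type u) (u : F.obj X), Λ.map (@Eq X) u u) ∧
  (∀ {X Y A B : Type u} (r : X → Y → Prop) (f : A → X) (g : B → Y)
    (u : F.obj A) (v : F.obj B),
    Λ.map (fun a b => r (f a) (g b)) u v ↔ Λ.map r (F.map (TypeCat.ofHom f) u) (F.map (TypeCat.ofHom g) v))

/-- `Λ` is normal: `Λ1_X = 1_{FX}` for every set `X`. -/
def IsNormal (F : Type u ⥤ Type u) (Λ : Relator F) : Prop :=
  ∀ (X : Type u) (u v : F.obj X), Λ.map (@Eq X) u v ↔ u = v

/-- Every set functor that admits a normal relational connector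
admits a greatest normal relational connector. -/
theorem stmt7 (F : Type u ⥤ Type u)
    (h : ∃ Λ : Relator F, IsNormal F Λ ∧ IsRelConnector F Λ) :
    ∃ Λ : Relator F, IsNormal F Λ ∧ IsRelConnector F Λ ∧
      ∀ Λ' : Relator F, IsNormal F Λ' → IsRelConnector F Λ' →
        ∀ {X Y : Type u} (r : X → Y → Prop) (u : F.obj X) (v : F.obj Y),
          Λ'.map r u v → Λ.map r u v := by
  obtain ⟨Λ₀, hn₀, hc₀⟩ := h
  refine ⟨⟨fun {X Y} r u v => ∃ Λ' : Relator F, IsNormal F Λ' ∧ IsRelConnector F Λ' ∧ Λ'.map r u v,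
    ?_⟩, ?_, ⟨?_, ?_⟩, ?_⟩
  · rintro X Y r s hrs u v ⟨Λ', h1, h2, h3⟩
    exact ⟨Λ', h1, h2, Λ'.mono hrs u v h3⟩
  · intro X u v
    constructor
    · rintro ⟨Λ', h1, _, h3⟩; exact (h1 X u v).1 h3
    · rintro rfl; exact ⟨Λ₀, hn₀, hc₀, (hn₀ X u u).2 rfl⟩
  · intro X u; exact ⟨Λ₀, hn₀, hc₀, (hn₀ X u u).2 rfl⟩
  · intro X Y A B r f g u v
    constructor
    · rintro ⟨Λ', h1, h2, h3⟩; exact ⟨Λ', h1, h2, (h2.2 r f g u v).1 h3⟩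
    · rintro ⟨Λ', h1, h2, h3⟩; exact ⟨Λ', h1, h2, (h2.2 r f g u v).2 h3⟩
  · intro Λ' h1 h2 X Y r u v h3; exact ⟨Λ', h1, h2, h3⟩
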